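/- arXiv:2310.06550 — 4 statements merged into one kernel-verified Lean document; each statement's English description precedes it below -/
import Mathlib

section
/- For every n ≥ 1 and every permutation σ in the symmetric group Σ_n, the order of σ is strictly less than e^{n/e}; i.e., (orderOf σ : ℝ) < exp(n / e), where e = exp(1). -/
open Real

lemma nat_lt_exp_div_e (k : ℕ) (hk : 2 ≤ k) : (k : ℝ) < Real.exp ((k : ℝ) / Real.exp 1) := by
  have h2 : (2:ℝ) < Real.exp 1 := by have := Real.exp_one_gt_d9; norm_num at this ⊢; linarith
  have h3 : Real.exp 1 < 3 := by have := Real.exp_one_lt_d9; norm_num at this ⊢; linarith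
  have hkpos : (0:ℝ) < k := by positivity
  have hepos : (0:ℝ) < Real.exp 1 := Real.exp_pos 1
  have hne : (k : ℝ) / Real.exp 1 ≠ 1 := by
    intro h
    have hk' : (k : ℝ) = Real.exp 1 := by field_simp at h; linarith
    rcases eq_or_lt_of_le hk with h' | h'
    · rw [← h'] at hk'; push_cast at hk'; linarith
    · have : (3:ℝ) ≤ k := by exact_mod_cast h'
      linarith
  have hlog : Real.log ((k : ℝ) / Real.exp 1) < (k : ℝ) / Real.exp 1 - 1 :=
    Real.log_lt_sub_one_of_pos (by positivity) hne
  rw [Real.log_div (ne_of_gt hkpos) (ne_of_gt hepos), Real.log_exp] at hlog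
  have : Real.log (k : ℝ) < (k : ℝ) / Real.exp 1 := by linarith
  calc (k : ℝ) = Real.exp (Real.log (k : ℝ)) := (Real.exp_log hkpos).symm
    _ < Real.exp ((k : ℝ) / Real.exp 1) := Real.exp_lt_exp.mpr this

lemma prod_le_exp_sum_div_e (s : Multiset ℕ) (h : ∀ x ∈ s, 2 ≤ x) :
    (s.prod : ℝ) ≤ Real.exp ((s.sum : ℝ) / Real.exp 1) := by
  induction s using Multiset.induction_on with
  | empty => simp
  | cons a t ih =>
    have ha := h a (Multiset.mem_cons_self a t)
    have ht : ∀ x ∈ t, 2 ≤ x := fun x hx => h x (Multiset.mem_cons_of_mem hx)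
    have iht := ih ht
    have ha' : (a : ℝ) ≤ Real.exp ((a : ℝ) / Real.exp 1) :=
      le_of_lt (nat_lt_exp_div_e a ha)
    have hprodpos : (0:ℝ) ≤ (t.prod : ℝ) := by positivity
    have hapos : (0:ℝ) ≤ (a : ℝ) := by positivity
    calc ((a ::ₘ t).prod : ℝ) = (a : ℝ) * (t.prod : ℝ) := by push_cast [Multiset.prod_cons]; ring
      _ ≤ Real.exp ((a : ℝ) / Real.exp 1) * Real.exp ((t.sum : ℝ) / Real.exp 1) := by
          apply mul_le_mul ha' iht hprodpos (le_of_lt (Real.exp_pos _))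
      _ = Real.exp (((a ::ₘ t).sum : ℝ) / Real.exp 1) := by
          rw [← Real.exp_add, Multiset.sum_cons]; push_cast; ring_nf

lemma prod_lt_exp_sum_div_e (a : ℕ) (t : Multiset ℕ) (h : ∀ x ∈ a ::ₘ t, 2 ≤ x) :
    ((a ::ₘ t).prod : ℝ) < Real.exp (((a ::ₘ t).sum : ℝ) / Real.exp 1) := by
  have ha := h a (Multiset.mem_cons_self a t)
  have ht : ∀ x ∈ t, 2 ≤ x := fun x hx => h x (Multiset.mem_cons_of_mem hx)
  have iht := prod_le_exp_sum_div_e t ht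
  have ha' : (a : ℝ) < Real.exp ((a : ℝ) / Real.exp 1) := nat_lt_exp_div_e a ha
  have hprodpos : (0:ℝ) < (t.prod : ℝ) := by
    have : 0 < t.prod := Multiset.prod_pos fun x hx => lt_of_lt_of_le (by norm_num) (ht x hx)
    exact_mod_cast this
  calc ((a ::ₘ t).prod : ℝ) = (a : ℝ) * (t.prod : ℝ) := by push_cast [Multiset.prod_cons]; ring
    _ < Real.exp ((a : ℝ) / Real.exp 1) * Real.exp ((t.sum : ℝ) / Real.exp 1) := by
        exact mul_lt_mul ha' iht hprodpos (le_of_lt (Real.exp_pos _))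
    _ = Real.exp (((a ::ₘ t).sum : ℝ) / Real.exp 1) := by
        rw [← Real.exp_add, Multiset.sum_cons]; push_cast; ring_nf

/-- Landau's bound: for `n ≥ 1`, the order of any permutation in `Σ_n`
is strictly less than `e^(n/e)`. -/
theorem orderOf_perm_lt_exp_div_exp (n : ℕ) (hn : 1 ≤ n) (σ : Equiv.Perm (Fin n)) :
    (orderOf σ : ℝ) < Real.exp ((n : ℝ) / Real.exp 1) := by
  have hsum : σ.cycleType.sum ≤ n := by
    rw [Equiv.Perm.sum_cycleType]
    simpa using Finset.card_le_univ σ.support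
  have htwo : ∀ x ∈ σ.cycleType, 2 ≤ x := fun x hx => Equiv.Perm.two_le_of_mem_cycleType hx
  rcases Multiset.empty_or_exists_mem σ.cycleType with h0 | ⟨a, ha⟩
  · have hσ : σ = 1 := by rwa [← Equiv.Perm.cycleType_eq_zero]
    subst hσ
    simp only [orderOf_one, Nat.cast_one]
    rw [Real.one_lt_exp_iff]
    have : (1:ℝ) ≤ n := by exact_mod_cast hn
    positivity
  · obtain ⟨t, heq⟩ := Multiset.exists_cons_of_mem ha
    rw [heq] at hsum htwo
    have hdvd : orderOf σ ∣ (a ::ₘ t).prod := by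
      rw [← Equiv.Perm.lcm_cycleType, heq]
      exact Multiset.lcm_dvd.mpr fun b hb => Multiset.dvd_prod hb
    have hle : (orderOf σ : ℝ) ≤ ((a ::ₘ t).prod : ℝ) := by
      have hpos : 0 < (a ::ₘ t).prod :=
        Multiset.prod_pos fun x hx => lt_of_lt_of_le (by norm_num) (htwo x hx)
      exact_mod_cast Nat.le_of_dvd hpos hdvd
    have hstrict := prod_lt_exp_sum_div_e a t htwo
    have hmono : Real.exp (((a ::ₘ t).sum : ℝ) / Real.exp 1) ≤ Real.exp ((n : ℝ) / Real.exp 1) := by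
      apply Real.exp_le_exp.mpr
      gcongr
    calc (orderOf σ : ℝ) ≤ ((a ::ₘ t).prod : ℝ) := hle
      _ < Real.exp (((a ::ₘ t).sum : ℝ) / Real.exp 1) := hstrict
      _ ≤ Real.exp ((n : ℝ) / Real.exp 1) := hmono
end

section
/- Let g(ن) denote the largest order of an element of the symmetric group Σ_n (the Landau function), i.e., g(n) = max over σ in Σ_n of orderOf σ. Then the sequence n!/g(n) diverges to +∞; that is, the function n ↦ (n! : ℝ) / g(n) tends to infinity along the filter atTop. -/
open Filter

lemma multiset_prod_le_two_pow_sum (s : Multiset ℕ) : s.prod ≤ 2 ^ s.sum := by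
  induction s using Multiset.induction with
  | empty => simp
  | cons a s ih =>
    rw [Multiset.prod_cons, Multiset.sum_cons, pow_add]
    exact Nat.mul_le_mul (Nat.lt_two_pow_self (n := a)).le ih

lemma orderOf_perm_le_two_pow {n : ℕ} (σ : Equiv.Perm (Fin n)) :
    orderOf σ ≤ 2 ^ n := by
  rw [← Equiv.Perm.lcm_cycleType]
  have hprodpos : 0 < σ.cycleType.prod := by
    apply Multiset.prod_pos
    intro a ha
    exact lt_of_lt_of_le two_pos (Equiv.Perm.two_le_of_mem_cycleType ha)
  have hdvd : σ.cycleType.lcm ∣ σ.cycleType.prod := by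
    apply Multiset.lcm_dvd.2
    intro a ha
    exact Multiset.dvd_prod ha
  refine (Nat.le_of_dvd hprodpos hdvd).trans ?_
  refine (multiset_prod_le_two_pow_sum _).trans ?_
  apply Nat.pow_le_pow_right (by norm_num)
  rw [Equiv.Perm.sum_cycleType]
  simpa using Finset.card_le_univ σ.support

/-- If `g n` denotes the Landau function (the largest order of an element of the
symmetric group `Σ_n`), then `n! / g n → +∞` as `n → ∞`. -/
theorem factorial_div_landau_tendsto_atTop :
    Tendsto
      (fun n : ℕ =>
        (n.factorial : ℝ) /
          ((Finset.univ.sup fun σ : Equiv.Perm (Fin n) => orderOf σ : ℕ) : ℝ))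
      atTop atTop := by
  have hbase : Tendsto (fun n : ℕ => (n.factorial : ℝ) / 2 ^ n) atTop atTop := by
    have h0 : Tendsto (fun n : ℕ => (2 : ℝ) ^ n / n.factorial) atTop (nhds 0) :=
      FloorSemiring.tendsto_pow_div_factorial_atTop 2
    have h0' : Tendsto (fun n : ℕ => (2 : ℝ) ^ n / n.factorial) atTop
        (nhdsWithin 0 (Set.Ioi 0)) := by
      apply tendsto_nhdsWithin_of_tendsto_nhds_of_eventually_within _ h0
      filter_upwards with n
      exact Set.mem_Ioi.2 (by positivity)
    have := h0'.inv_tendsto_nhdsGT_zero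
    simpa [Pi.inv_def, inv_div] using this
  apply tendsto_atTop_mono _ hbase
  intro n
  set g : ℕ := Finset.univ.sup fun σ : Equiv.Perm (Fin n) => orderOf σ with hg
  have hg1 : 1 ≤ g := by
    have := Finset.le_sup (f := fun σ : Equiv.Perm (Fin n) => orderOf σ)
      (Finset.mem_univ (1 : Equiv.Perm (Fin n)))
    simpa only [orderOf_one] using this
  have hgle : g ≤ 2 ^ n := Finset.sup_le fun σ _ => orderOf_perm_le_two_pow σ
  apply div_le_div_of_nonneg_left (by positivity) (by positivity)
  exact_mod_cast hgle
end

section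
/- Let n ≥ 2 and let σ be an element of the alternating group A_n. Then the following are equivalent: (i) there exists an element τ of A_n that is conjugate to σ in Σ_n but not conjugate to σ by any element of A_n (i.e., the Σ_n-conjugacy class of σ splits in A_n); (ii) the cycle lengths of σ, counting fixed points as cycles of length 1, are pairwise distinct and all odd; equivalently, the cycle type of σ (the multiset of lengths ≥ 2 of its nontrivial cycles) has no repeated entries, every entry is odd, and σ has at most one fixed point. -/
open Equiv Equiv.Perm Finset

section Aux
variable {α : Type*} [Fintype α] [DecidableEq α]
lemma exists_swap_perm (g : Perm α) (s : Finset α) (hs : ∀ x ∈ s, g x ∉ s) :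
    ∃ ν : Perm α, (∀ x ∈ s, ν x = g x) ∧ (∀ x ∈ s.image g, ν x = g⁻¹ x) ∧
      (∀ x, x ∉ s → x ∉ s.image g → ν x = x) ∧ Perm.sign ν = (-1) ^ s.card := by
  induction s using Finset.induction with
  | empty => exact ⟨1, by simp⟩
  | @insert a s ha ih =>
    have hs' : ∀ x ∈ s, g x ∉ s := fun x hx h =>
      hs x (mem_insert_of_mem hx) (mem_insert_of_mem h)
    obtain ⟨ν', h1, h2, h3, h4⟩ := ih hs'
    have hga : g a ∉ insert a s := hs a (mem_insert_self a s)
    have hgaa : g a ≠ a := fun h => hga (by rw [h]; exact mem_insert_self a s)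
    have hgas : g a ∉ s := fun h => hga (mem_insert_of_mem h)
    have hganotim : g a ∉ s.image g := by
      intro h
      obtain ⟨y, hy, hya⟩ := Finset.mem_image.mp h
      exact ha ((g.injective hya) ▸ hy)
    have hanotim : a ∉ s.image g := by
      intro h
      obtain ⟨y, hy, hya⟩ := Finset.mem_image.mp h
      exact hs y (mem_insert_of_mem hy) (hya ▸ mem_insert_self a s)
    refine ⟨Equiv.swap a (g a) * ν', ?_, ?_, ?_, ?_⟩
    · intro x hx
      rcases Finset.mem_insert.mp hx with rfl | hx
      · simp [h3 x ha hanotim, Equiv.swap_apply_left]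
      · simp only [Perm.mul_apply, h1 x hx]
        apply Equiv.swap_apply_of_ne_of_ne
        · exact fun h => hs x (mem_insert_of_mem hx) (h ▸ mem_insert_self a s)
        · exact fun h => ha (g.injective h ▸ hx)
    · intro x hx
      rw [Finset.image_insert] at hx
      rcases Finset.mem_insert.mp hx with rfl | hx
      · simp only [Perm.mul_apply, h3 (g a) hgas hganotim, Perm.coe_inv, Equiv.symm_apply_apply]
        exact Equiv.swap_apply_right a (g a)
      · obtain ⟨y, hy, rfl⟩ := Finset.mem_image.mp hx
        simp only [Perm.mul_apply, h2 _ hx, Perm.coe_inv, Equiv.symm_apply_apply]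
        apply Equiv.swap_apply_of_ne_of_ne
        · exact fun h => ha (h ▸ hy)
        · exact fun h => hgas (h ▸ hy)
    · intro x hx1 hx2
      rw [Finset.image_insert] at hx2
      have hxa : x ≠ a := fun h => hx1 (h ▸ mem_insert_self a s)
      have hxs : x ∉ s := fun h => hx1 (mem_insert_of_mem h)
      have hxga : x ≠ g a := fun h => hx2 (h ▸ mem_insert_self _ _)
      have hxim : x ∉ s.image g := fun h => hx2 (mem_insert_of_mem h)
      simp only [Perm.mul_apply, h3 x hxs hxim]
      exact Equiv.swap_apply_of_ne_of_ne hxa hxga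
    · rw [map_mul, h4, Equiv.Perm.sign_swap hgaa.symm,
        Finset.card_insert_of_notMem ha, pow_succ]
      exact (mul_comm _ _)

lemma odd_commuting_of_not_cond (σ : Perm α)
    (h : ¬ (σ.cycleType.Nodup ∧ (∀ k ∈ σ.cycleType, Odd k) ∧
        (Finset.univ.filter fun x => σ x = x).card ≤ 1)) :
    ∃ π : Perm α, Commute π σ ∧ Perm.sign π = -1 := by
  by_cases hB : ∀ k ∈ σ.cycleType, Odd k
  swap
  · -- a cycle of even length is an odd commuting permutation
    push_neg at hB
    obtain ⟨k, hk, hke⟩ := hB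
    rw [Nat.not_odd_iff_even] at hke
    rw [cycleType_def, Multiset.mem_map] at hk
    obtain ⟨c, hc, hck⟩ := hk
    have hc' : c ∈ σ.cycleFactorsFinset := hc
    refine ⟨c, self_mem_cycle_factors_commute hc', ?_⟩
    rw [(mem_cycleFactorsFinset_iff.mp hc').1.sign]
    simp only [Function.comp_apply] at hck
    rw [hck, hke.neg_one_pow]
  by_cases hA : σ.cycleType.Nodup
  · -- at least two fixed points: a transposition of them
    have hC : ¬ (Finset.univ.filter fun x => σ x = x).card ≤ 1 := fun hC => h ⟨hA, hB, hC⟩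
    push_neg at hC
    obtain ⟨a, ha, b, hb, hab⟩ := Finset.one_lt_card.mp hC
    have ha' : σ a = a := (Finset.mem_filter.mp ha).2
    have hb' : σ b = b := (Finset.mem_filter.mp hb).2
    refine ⟨Equiv.swap a b, ?_, Equiv.Perm.sign_swap hab⟩
    have hd : Perm.Disjoint (Equiv.swap a b) σ := by
      intro x
      by_cases hxa : x = a
      · exact Or.inr (hxa ▸ ha')
      by_cases hxb : x = b
      · exact Or.inr (hxb ▸ hb')
      · exact Or.inl (Equiv.swap_apply_of_ne_of_ne hxa hxb)
    exact hd.commute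
  · -- two cycles of the same (odd) length: swap them
    obtain ⟨c, hc, d, hd, hcard, hcd⟩ : ∃ c ∈ σ.cycleFactorsFinset.val, ∃ d ∈ σ.cycleFactorsFinset.val,
        c.support.card = d.support.card ∧ c ≠ d := by
      by_contra hcon
      push_neg at hcon
      apply hA
      rw [cycleType_def]
      exact Multiset.Nodup.map_on
        (fun x hx y hy hxy => hcon x hx y hy hxy) σ.cycleFactorsFinset.nodup
    have hc' : c ∈ σ.cycleFactorsFinset := hc
    have hd' : d ∈ σ.cycleFactorsFinset := hd
    have hcc : c.IsCycle := (mem_cycleFactorsFinset_iff.mp hc').1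
    have hdc : d.IsCycle := (mem_cycleFactorsFinset_iff.mp hd').1
    have hdisj : Perm.Disjoint c d := σ.cycleFactorsFinset_pairwise_disjoint hc' hd' hcd
    have hsupp : _root_.Disjoint c.support d.support := hdisj.disjoint_support
    obtain ⟨ρ, hρ⟩ := isConj_iff.mp (hcc.isConj hdc hcard)
    have himg : c.support.image ρ = d.support := by
      rw [← hρ, Equiv.Perm.support_conj, Finset.map_eq_image]
      rfl
    have hmemd : ∀ x ∈ c.support, ρ x ∈ d.support := fun x hx =>
      himg ▸ Finset.mem_image_of_mem ρ hx
    obtain ⟨ν, h1, h2, h3, h4⟩ := exists_swap_perm ρ c.support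
      (fun x hx hx2 => Finset.disjoint_left.mp hsupp hx2 (hmemd x hx))
    rw [himg] at h2
    have hkodd : Odd c.support.card := by
      apply hB
      rw [cycleType_def, Multiset.mem_map]
      exact ⟨c, hc, rfl⟩
    refine ⟨ν, ?_, by rw [h4, hkodd.neg_one_pow]⟩
    -- ν commutes with σ
    have hcσ : ∀ y ∈ c.support, c y = σ y := (mem_cycleFactorsFinset_iff.mp hc').2
    have hdσ : ∀ y ∈ d.support, d y = σ y := (mem_cycleFactorsFinset_iff.mp hd').2
    have hsemic : ∀ y, ρ (c y) = d (ρ y) := by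
      intro y
      have : ρ * c * ρ⁻¹ = d := hρ
      have := congrArg (fun p => p (ρ y)) this
      simpa [Perm.mul_apply] using this
    have hsemid : ∀ y, ρ⁻¹ (d y) = c (ρ⁻¹ y) := by
      intro y
      have := (hsemic (ρ⁻¹ y)).symm
      exact (by simpa [Perm.coe_inv, Equiv.apply_symm_apply] using congrArg (ρ⁻¹ ·) this.symm : c (ρ⁻¹ y) = ρ⁻¹ (d y)).symm
    ext x
    simp only [Perm.mul_apply]
    by_cases hx : x ∈ c.support
    · have hσx : σ x = c x := (hcσ x hx).symm
      have hcx : c x ∈ c.support := apply_mem_support.mpr hx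
      rw [hσx, h1 _ hcx, h1 _ hx, hsemic]
      exact (hdσ _ (hmemd x hx)).symm ▸ (hdσ (ρ x) (hmemd x hx))
    · by_cases hx' : x ∈ d.support
      · have hσx : σ x = d x := (hdσ x hx').symm
        have hdx : d x ∈ d.support := apply_mem_support.mpr hx'
        have hρinv : ρ⁻¹ x ∈ c.support := by
          rw [← himg] at hx'
          obtain ⟨y, hy, rfl⟩ := Finset.mem_image.mp hx'
          simpa using hy
        rw [hσx, h2 _ hdx, h2 _ hx', hsemid]
        exact (hcσ _ hρinv).symm ▸ (hcσ (ρ⁻¹ x) hρinv)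
      · have h1' : σ x ∉ c.support := fun hh => hx ((mem_cycleFactorsFinset_support hc' x).mp hh)
        have h2' : σ x ∉ d.support := fun hh => hx' ((mem_cycleFactorsFinset_support hd' x).mp hh)
        rw [h3 _ h1' (himg ▸ h2'), h3 _ hx (himg ▸ hx')]

lemma sign_eq_one_of_commute (σ : Perm α) (h1 : σ.cycleType.Nodup)
    (h2 : ∀ k ∈ σ.cycleType, Odd k)
    (h3 : (Finset.univ.filter fun x => σ x = x).card ≤ 1) :
    ∀ π : Perm α, Commute π σ → Perm.sign π = 1 := by
  suffices H : ∀ m, ∀ π : Perm α, Commute π σ → (π.support ∩ σ.support).card ≤ m →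
      Perm.sign π = 1 by
    exact fun π hπ => H _ π hπ le_rfl
  intro m
  induction m with
  | zero =>
    intro π hπ hcard
    have hempty : π.support ∩ σ.support = ∅ := Finset.card_eq_zero.mp (Nat.le_zero.mp hcard)
    have hsub : π.support ⊆ Finset.univ.filter fun x => σ x = x := by
      intro x hx
      refine Finset.mem_filter.mpr ⟨Finset.mem_univ x, ?_⟩
      by_contra hσx
      have : x ∈ π.support ∩ σ.support :=
        Finset.mem_inter.mpr ⟨hx, mem_support.mpr hσx⟩
      simp [hempty] at this
    have : π = 1 := card_support_le_one.mp (le_trans (Finset.card_le_card hsub) h3)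
    rw [this, map_one]
  | succ m ih =>
    intro π hπ hcard
    by_cases hle : (π.support ∩ σ.support).card ≤ m
    · exact ih π hπ hle
    push_neg at hle
    obtain ⟨x, hx⟩ := Finset.card_pos.mp (lt_of_le_of_lt (Nat.zero_le m) hle)
    obtain ⟨hxπ, hxσ⟩ := Finset.mem_inter.mp hx
    set c := σ.cycleOf x with hcdef
    have hc : c ∈ σ.cycleFactorsFinset := cycleOf_mem_cycleFactorsFinset_iff.mpr hxσ
    have hxc : x ∈ c.support := by
      rw [hcdef, mem_support_cycleOf_iff]
      exact ⟨Equiv.Perm.SameCycle.refl σ x, hxσ⟩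
    have hσconj : π * σ * π⁻¹ = σ := by
      rw [hπ.eq, mul_inv_cancel_right]
    have hconj : π * c * π⁻¹ ∈ σ.cycleFactorsFinset := by
      have := (mem_cycleFactorsFinset_conj σ π c).mpr hc
      rwa [hσconj] at this
    have hcards : (π * c * π⁻¹).support.card = c.support.card := by
      rw [Equiv.Perm.support_conj, Finset.card_map]
    have hcc : π * c * π⁻¹ = c := by
      have hinj := Multiset.inj_on_of_nodup_map (f := Finset.card ∘ Equiv.Perm.support)
        (s := σ.cycleFactorsFinset.val) (by rwa [← cycleType_def])
      exact hinj _ hconj _ hc hcards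
    have hπc : Commute π c := by
      have := congrArg (fun p => p * π) hcc
      exact (by simpa [mul_assoc] using this : π * c = c * π)
    have hcyc : c.IsCycle := (mem_cycleFactorsFinset_iff.mp hc).1
    obtain ⟨hc', hw⟩ := hcyc.commute_iff.mp hπc
    set w := Equiv.Perm.ofSubtype (Equiv.Perm.subtypePerm π hc') with hwdef
    obtain ⟨i, hi⟩ := Subgroup.mem_zpowers_iff.mp hw
    have hsignc : Perm.sign c = 1 := by
      have hk : c.support.card ∈ σ.cycleType := by
        rw [cycleType_def, Multiset.mem_map]
        exact ⟨c, hc, rfl⟩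
      rw [hcyc.sign, (h2 _ hk).neg_one_pow]
      simp
    have hsignw : Perm.sign w = 1 := by
      rw [← hi, map_zpow, hsignc, one_zpow]
    have hw1 : ∀ y ∈ c.support, w y = π y := fun y hy =>
      Equiv.Perm.ofSubtype_apply_of_mem _ hy
    have hw2 : ∀ y, y ∉ c.support → w y = y := fun y hy =>
      Equiv.Perm.ofSubtype_apply_of_not_mem _ hy
    set π' := π * w⁻¹ with hπ'def
    have hcσcomm : Commute w σ := by
      rw [← hi]
      exact (self_mem_cycle_factors_commute hc).zpow_left i
    have hπ'σ : Commute π' σ := hπ.mul_left hcσcomm.inv_left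
    have hkey : ∀ y, y ∉ c.support → π' y = π y := by
      intro y hy
      have : w⁻¹ y = y := by
        have h := hw2 y hy
        nth_rewrite 1 [← h]
        exact Equiv.symm_apply_apply w y
      simp only [hπ'def, Perm.mul_apply, this]
    have hkey2 : ∀ y ∈ c.support, π' y = y := by
      intro y hy
      have hwy : w⁻¹ y ∈ c.support := by
        by_contra hny
        have := hw2 _ hny
        rw [show w (w⁻¹ y) = y from Equiv.apply_symm_apply w y] at this
        exact hny (this ▸ hy)
      simp only [hπ'def, Perm.mul_apply]
      rw [← hw1 _ hwy, show w (w⁻¹ y) = y from Equiv.apply_symm_apply w y]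
    have hsub : π'.support ∩ σ.support ⊆ (π.support ∩ σ.support).erase x := by
      intro y hy
      obtain ⟨hy1, hy2⟩ := Finset.mem_inter.mp hy
      have hyc : y ∉ c.support := fun hh => (mem_support.mp hy1) (hkey2 y hh)
      refine Finset.mem_erase.mpr ⟨fun hh => hyc (hh ▸ hxc), Finset.mem_inter.mpr ⟨?_, hy2⟩⟩
      rw [mem_support, ← hkey y hyc]
      exact mem_support.mp hy1
    have hle' : (π'.support ∩ σ.support).card ≤ m := by
      calc (π'.support ∩ σ.support).card ≤ ((π.support ∩ σ.support).erase x).card :=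
            Finset.card_le_card hsub
        _ = (π.support ∩ σ.support).card - 1 := Finset.card_erase_of_mem hx
        _ ≤ (m + 1) - 1 := Nat.sub_le_sub_right hcard 1
        _ = m := rfl
    have hsignπ' := ih π' hπ'σ hle'
    have : π = π' * w := by rw [hπ'def, inv_mul_cancel_right]
    rw [this, map_mul, hsignπ', hsignw, mul_one]
end Aux

/-- For `n ≥ 2` and `σ ∈ A_n`, the `Σ_n`-conjugacy class of `σ` splits in `A_n`
(i.e. some `τ ∈ A_n` is conjugate to `σ` in `Σ_n` but not by an element of `A_n`)
if and only if the cycle lengths of `σ` (counting fixed points as cycles of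
length 1) are pairwise distinct and all odd, i.e. the cycle type of `σ` has no
repeated entries, every entry is odd, and `σ` has at most one fixed point. -/
theorem conjugacy_class_splits_iff (n : ℕ) (hn : 2 ≤ n) (σ : Equiv.Perm (Fin n))
    (hσ : σ ∈ alternatingGroup (Fin n)) :
    (∃ τ ∈ alternatingGroup (Fin n), IsConj σ τ ∧
        ¬ ∃ π ∈ alternatingGroup (Fin n), π * σ * π⁻¹ = τ) ↔
      (σ.cycleType.Nodup ∧ (∀ k ∈ σ.cycleType, Odd k) ∧
        (Finset.univ.filter fun x => σ x = x).card ≤ 1) := by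
  constructor
  · intro hi
    by_contra hcond
    obtain ⟨π₀, hπ₀c, hπ₀s⟩ := odd_commuting_of_not_cond σ hcond
    obtain ⟨τ, hτA, hconj, hno⟩ := hi
    obtain ⟨ρ, hρ⟩ := isConj_iff.mp hconj
    rcases Int.units_eq_one_or (Perm.sign ρ) with h | h
    · exact hno ⟨ρ, Equiv.Perm.mem_alternatingGroup.mpr h, hρ⟩
    · refine hno ⟨ρ * π₀, ?_, ?_⟩
      · rw [Equiv.Perm.mem_alternatingGroup, map_mul, h, hπ₀s]
        decide
      · have hfix : π₀ * σ * π₀⁻¹ = σ := by rw [hπ₀c.eq, mul_inv_cancel_right]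
        calc (ρ * π₀) * σ * (ρ * π₀)⁻¹ = ρ * (π₀ * σ * π₀⁻¹) * ρ⁻¹ := by group
          _ = ρ * σ * ρ⁻¹ := by rw [hfix]
          _ = τ := hρ
  · rintro ⟨hA, hB, hC⟩
    have hab : (⟨0, by omega⟩ : Fin n) ≠ ⟨1, by omega⟩ := by
      simp [Fin.mk.injEq]
    set t := Equiv.swap (⟨0, by omega⟩ : Fin n) ⟨1, by omega⟩ with htdef
    refine ⟨t * σ * t⁻¹, ?_, isConj_iff.mpr ⟨t, rfl⟩, ?_⟩
    · rw [Equiv.Perm.mem_alternatingGroup, map_mul, map_mul, map_inv,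
        Equiv.Perm.mem_alternatingGroup.mp hσ]
      simp
    · rintro ⟨π, hπA, hπ⟩
      have hcomm : Commute (t⁻¹ * π) σ := by
        have heq : (t⁻¹ * π) * σ * (t⁻¹ * π)⁻¹ = σ := by
          calc (t⁻¹ * π) * σ * (t⁻¹ * π)⁻¹ = t⁻¹ * (π * σ * π⁻¹) * t := by group
            _ = t⁻¹ * (t * σ * t⁻¹) * t := by rw [hπ]
            _ = σ := by group
        have := congrArg (fun p => p * (t⁻¹ * π)) heq
        exact (by simpa [mul_assoc] using this : t⁻¹ * π * σ = σ * (t⁻¹ * π))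
      have hone := sign_eq_one_of_commute σ hA hB hC _ hcomm
      rw [map_mul, map_inv, Equiv.Perm.sign_swap hab,
        Equiv.Perm.mem_alternatingGroup.mp hπA] at hone
      simp at hone
end

section
/- Let n ≥ 2 and let σ be an element of the alternating group A_n whose cycle lengths, counting fixed points as cycles of length 1, are pairwise distinct and all odd. Then the Σ_n-conjugacy class of σ splits in A_n into two classes of equal size: the set of elements of the form π σ π^{-1} with π in A_n has cardinality exactly half the cardinality of the set of elements of the form π σ π^{-1} with π in Σ_n. -/
open Equiv Equiv.Perm Finset

lemma perm_noncommProd_apply_eq_self {α β : Type*} (s : Finset β)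
    (f : β → Equiv.Perm α) (comm) (x : α) (h : ∀ d ∈ s, f d x = x) :
    (s.noncommProd f comm) x = x := by
  apply Finset.noncommProd_induction _ _ _ (fun g : Equiv.Perm α => g x = x)
  · intro a b hax hbx
    rw [Equiv.Perm.mul_apply, hbx, hax]
  · rfl
  · exact h

lemma sign_eq_one_of_commute_aux {n : ℕ} {σ : Equiv.Perm (Fin n)}
    (hnodup : σ.cycleType.Nodup) (hodd : ∀ k ∈ σ.cycleType, Odd k)
    (hfix : (Finset.univ.filter fun x => σ x = x).card ≤ 1)
    {π : Equiv.Perm (Fin n)} (hπ : π * σ * π⁻¹ = σ) :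
    Equiv.Perm.sign π = 1 := by
  classical
  have hcomm : π * σ = σ * π := by
    rw [← mul_inv_eq_iff_eq_mul]; exact hπ
  -- step 1: π fixes each cycle factor
  have hconj : ∀ c ∈ σ.cycleFactorsFinset, π * c * π⁻¹ = c := by
    intro c hc
    have h1 : π * c * π⁻¹ ∈ σ.cycleFactorsFinset := by
      rw [← hπ]; exact (Equiv.Perm.mem_cycleFactorsFinset_conj σ π c).mpr hc
    have hcard : ((π * c * π⁻¹).support.card) = c.support.card :=
      Equiv.Perm.card_support_conj
    have hnd : (σ.cycleFactorsFinset.val.map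
        (fun c : Equiv.Perm (Fin n) => c.support.card)).Nodup := by
      have : σ.cycleType = σ.cycleFactorsFinset.val.map
          (fun c : Equiv.Perm (Fin n) => c.support.card) := by
        rw [Equiv.Perm.cycleType_def]; rfl
      rwa [this] at hnodup
    exact Multiset.inj_on_of_nodup_map hnd _ h1 _ hc hcard
  have hccomm : ∀ c ∈ σ.cycleFactorsFinset, π * c = c * π := by
    intro c hc
    rw [← mul_inv_eq_iff_eq_mul]; exact hconj c hc
  -- step 2: choose powers
  have hkey : ∀ c : Equiv.Perm (Fin n), ∃ k : ℕ, c ∈ σ.cycleFactorsFinset →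
      ∀ x ∈ c.support, π x = (c ^ k) x := by
    intro c
    by_cases hc : c ∈ σ.cycleFactorsFinset
    · have hcyc : c.IsCycle := (Equiv.Perm.mem_cycleFactorsFinset_iff.mp hc).1
      obtain ⟨a, ha⟩ := id hcyc
      have hπa : c (π a) ≠ π a := by
        have : c (π a) = π (c a) := by
          have := hccomm c hc
          calc c (π a) = (c * π) a := rfl
          _ = (π * c) a := by rw [this]
          _ = π (c a) := rfl
        rw [this]
        exact fun h => ha.1 (π.injective h)
      obtain ⟨k, hk⟩ := hcyc.exists_pow_eq ha.1 hπa
      refine ⟨k, fun _ x hx => ?_⟩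
      obtain ⟨j, hj⟩ := hcyc.exists_pow_eq ha.1 (Equiv.Perm.mem_support.mp hx)
      have hcj : π * c ^ j = c ^ j * π := by
        have : Commute π c := hccomm c hc
        exact (this.pow_right j).eq
      calc π x = π ((c ^ j) a) := by rw [hj]
        _ = (π * c ^ j) a := rfl
        _ = (c ^ j * π) a := by rw [hcj]
        _ = (c ^ j) (π a) := rfl
        _ = (c ^ j) ((c ^ k) a) := by rw [hk]
        _ = (c ^ k) ((c ^ j) a) := by
            rw [← Equiv.Perm.mul_apply, ← Equiv.Perm.mul_apply, ← pow_add, ← pow_add, add_comm]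
        _ = (c ^ k) x := by rw [hj]
    · exact ⟨0, fun h => absurd h hc⟩
  choose k hk using hkey
  have comm : (σ.cycleFactorsFinset : Set (Equiv.Perm (Fin n))).Pairwise
      (Function.onFun Commute fun c => c ^ k c) :=
    fun a ha b hb hab => ((Equiv.Perm.cycleFactorsFinset_mem_commute σ ha hb hab).pow_pow _ _)
  set ρ := σ.cycleFactorsFinset.noncommProd (fun c => c ^ k c) comm with hρ
  have hπρ : π = ρ := by
    ext x
    by_cases hx : x ∈ σ.support
    · set c := σ.cycleOf x with hc
      have hcmem : c ∈ σ.cycleFactorsFinset :=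
        Equiv.Perm.cycleOf_mem_cycleFactorsFinset_iff.mpr hx
      have hxc : x ∈ c.support := by
        rw [hc, Equiv.Perm.mem_support_cycleOf_iff]
        exact ⟨Equiv.Perm.SameCycle.refl _ _, hx⟩
      have h1 : π x = (c ^ k c) x := hk c hcmem x hxc
      have h2 : ρ x = (c ^ k c) x := by
        rw [hρ, ← Finset.mul_noncommProd_erase σ.cycleFactorsFinset hcmem _ comm,
          Equiv.Perm.mul_apply]
        refine congrArg (c ^ k c) (perm_noncommProd_apply_eq_self _ _ _ _ ?_)
        intro d hd
        have hdmem := Finset.mem_of_mem_erase hd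
        have hdc : d ≠ c := Finset.ne_of_mem_erase hd
        have hdisj : Equiv.Perm.Disjoint d c :=
          σ.cycleFactorsFinset_pairwise_disjoint hdmem hcmem hdc
        have hdx : d x = x := by
          rcases hdisj x with h | h
          · exact h
          · exact absurd h (Equiv.Perm.mem_support.mp hxc)
        exact Equiv.Perm.pow_apply_eq_self_of_apply_eq_self hdx _
      rw [h1, h2]
    · have hσx : σ x = x := Equiv.Perm.notMem_support.mp hx
      have hπx : π x = x := by
        have hmem1 : x ∈ Finset.univ.filter fun y => σ y = y := by
          simp [hσx]
        have hmem2 : π x ∈ Finset.univ.filter fun y => σ y = y := by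
          have : σ (π x) = π x := by
            calc σ (π x) = (σ * π) x := rfl
            _ = (π * σ) x := by rw [hcomm]
            _ = π (σ x) := rfl
            _ = π x := by rw [hσx]
          simp [this]
        exact Finset.card_le_one.mp hfix _ hmem2 _ hmem1
      have hρx : ρ x = x := by
        apply perm_noncommProd_apply_eq_self
        intro d hd
        have hdx : d x = x := by
          by_contra h
          have hxd : x ∈ d.support := Equiv.Perm.mem_support.mpr h
          have := (Equiv.Perm.mem_cycleFactorsFinset_iff.mp hd).2 x hxd
          rw [hσx] at this
          exact h this
        exact Equiv.Perm.pow_apply_eq_self_of_apply_eq_self hdx _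
      rw [hπx, hρx]
  rw [hπρ, hρ]
  apply Finset.noncommProd_induction _ _ _ (fun g : Equiv.Perm (Fin n) => Equiv.Perm.sign g = 1)
  · intro a b hax hbx
    rw [map_mul, hax, hbx, one_mul]
  · exact map_one _
  · intro c hc
    have hcyc : c.IsCycle := (Equiv.Perm.mem_cycleFactorsFinset_iff.mp hc).1
    have hoddc : Odd c.support.card := by
      apply hodd
      rw [Equiv.Perm.cycleType_def]
      exact Multiset.mem_map_of_mem _ hc
    have : Equiv.Perm.sign c = 1 := by
      rw [hcyc.sign, hoddc.neg_one_pow, neg_neg]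
    rw [map_pow, this, one_pow]

/-- For `n ≥ 2`, if `σ ∈ A_n` has pairwise distinct, all-odd cycle lengths
(counting fixed points as cycles of length 1), then the `Σ_n`-conjugacy class of
`σ` splits in `A_n` into two classes of equal size: the `A_n`-conjugacy class of
`σ` has exactly half the cardinality of its `Σ_n`-conjugacy class. -/
theorem conjugacy_class_splits_into_halves (n : ℕ) (hn : 2 ≤ n)
    (σ : Equiv.Perm (Fin n)) (hσ : σ ∈ alternatingGroup (Fin n))
    (hnodup : σ.cycleType.Nodup) (hodd : ∀ k ∈ σ.cycleType, Odd k)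
    (hfix : (Finset.univ.filter fun x => σ x = x).card ≤ 1) :
    2 * Set.ncard {τ : Equiv.Perm (Fin n) |
        ∃ π ∈ alternatingGroup (Fin n), π * σ * π⁻¹ = τ} =
      Set.ncard {τ : Equiv.Perm (Fin n) |
        ∃ π : Equiv.Perm (Fin n), π * σ * π⁻¹ = τ} := by
  classical
  have key : ∀ π : Equiv.Perm (Fin n), π * σ * π⁻¹ = σ → Equiv.Perm.sign π = 1 :=
    fun π h => sign_eq_one_of_commute_aux hnodup hodd hfix h
  have h01 : (⟨0, by omega⟩ : Fin n) ≠ (⟨1, by omega⟩ : Fin n) := by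
    simp [Fin.ext_iff]
  set t : Equiv.Perm (Fin n) := Equiv.swap ⟨0, by omega⟩ ⟨1, by omega⟩ with ht
  have hst : Equiv.Perm.sign t = -1 := Equiv.Perm.sign_swap h01
  set TA := {τ : Equiv.Perm (Fin n) | ∃ π ∈ alternatingGroup (Fin n), π * σ * π⁻¹ = τ} with hTA
  set TG := {τ : Equiv.Perm (Fin n) | ∃ π : Equiv.Perm (Fin n), π * σ * π⁻¹ = τ} with hTG
  have himg : TG = TA ∪ (fun τ => t * τ * t⁻¹) '' TA := by
    ext τ
    constructor
    · rintro ⟨π, rfl⟩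
      by_cases hπ : π ∈ alternatingGroup (Fin n)
      · exact Or.inl ⟨π, hπ, rfl⟩
      · right
        refine ⟨(t⁻¹ * π) * σ * (t⁻¹ * π)⁻¹, ⟨t⁻¹ * π, ?_, rfl⟩, by group⟩
        rw [Equiv.Perm.mem_alternatingGroup] at hπ ⊢
        rcases Int.units_eq_one_or (Equiv.Perm.sign π) with h | h
        · exact absurd h hπ
        · rw [map_mul, map_inv, hst, h]
          rfl
    · rintro (⟨π, hπ, rfl⟩ | ⟨τ', ⟨π, hπ, rfl⟩, rfl⟩)
      · exact ⟨π, rfl⟩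
      · exact ⟨t * π, by group⟩
  have hdisj : Disjoint TA ((fun τ => t * τ * t⁻¹) '' TA) := by
    rw [Set.disjoint_left]
    rintro τ ⟨a, ha, rfl⟩ ⟨τ', ⟨b, hb, rfl⟩, heq⟩
    have hcom : ((t * b)⁻¹ * a) * σ * ((t * b)⁻¹ * a)⁻¹ = σ := by
      have : (t * b) * σ * (t * b)⁻¹ = a * σ * a⁻¹ := by
        rw [← heq]; group
      calc ((t * b)⁻¹ * a) * σ * ((t * b)⁻¹ * a)⁻¹
          = (t * b)⁻¹ * (a * σ * a⁻¹) * (t * b) := by group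
        _ = (t * b)⁻¹ * ((t * b) * σ * (t * b)⁻¹) * (t * b) := by rw [this]
        _ = σ := by group
    have h1 := key _ hcom
    rw [Equiv.Perm.mem_alternatingGroup] at ha hb
    rw [map_mul, map_inv, map_mul, hst, ha, hb] at h1
    simp at h1
  have hinj : Function.Injective (fun τ : Equiv.Perm (Fin n) => t * τ * t⁻¹) := by
    intro a b h
    simpa using mul_left_cancel (mul_right_cancel h)
  calc 2 * TA.ncard = TA.ncard + ((fun τ => t * τ * t⁻¹) '' TA).ncard := by
        rw [Set.ncard_image_of_injective _ hinj]; ring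
    _ = (TA ∪ (fun τ => t * τ * t⁻¹) '' TA).ncard :=
        (Set.ncard_union_eq hdisj (Set.toFinite _) (Set.toFinite _)).symm
    _ = TG.ncard := by rw [himg]
end
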